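/- Let L_0 be a hyperbolic difference operator whose Laplace invariants h_0 and k_0 are nowhere vanishing, let r ≥ 1, s ≥ 0, and suppose there exist functions A_0, …, A_s, B_0, …, B_r : ℤ × ℤ → ℂ with A_0, A_s, B_0, B_r nowhere vanishing such that: ψ : ℤ × ℤ → ℂ satisfies L_0ψ = 0 if and only if there exist N, M : ℤ → ℂ with ψ(n,m) = Σ_{i=0}^{s} A_i(n,m)N(n+i) + Σ_{j=0}^{r} B_j(n,m)M(m+j). Let L_1 be a Laplace transform of L_0. Then there exist functions Â_0, …, Â_{s+1}, B̂_0, …, B̂_{r−1} : ℤ × ℤ → ℂ with Â_0, Â_{s+1}, B̂_0, B̂_{r−1} nowhere vanishing such that: ψ satisfies L_1ψ = 0 if and only if there exist N, M : ℤ → ℂ with ψ(n,m) = Σ_{i=0}^{s+1} Â_i(n,m)N(n+i) + Σ_{j=0}^{r−1} B̂_j(n,m)M(m+j). -/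

import Mathlib

noncomputable section

/-- The hyperbolic difference operator with coefficients `a`, `b`, `c`:
`(Lψ)(n,m) = ψ(n+1,m+1) + a(n,m)ψ(n+1,m) + b(n,m)ψ(n,m+1) + c(n,m)ψ(n,m)`. -/
def Lop (a b c : ℤ → ℤ → ℂ) (ψ : ℤ → ℤ → ℂ) : ℤ → ℤ → ℂ :=
  fun n m => ψ (n + 1) (m + 1) + a n m * ψ (n + 1) m + b n m * ψ n (m + 1) + c n m * ψ n m

/-- The Laplace invariant `k(n,m) = c(n,m)/(a(n-1,m)b(n,m)) - 1`. -/
def kInv (a b c : ℤ → ℤ → ℂ) : ℤ → ℤ → ℂ :=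
  fun n m => c n m / (a (n - 1) m * b n m) - 1

/-- The Laplace invariant `h(n,m) = c(n,m)/(a(n,m)b(n,m-1)) - 1`. -/
def hInv (a b c : ℤ → ℤ → ℂ) : ℤ → ℤ → ℂ :=
  fun n m => c n m / (a n m * b n (m - 1)) - 1

/-- The operator `(Dψ)(n,m) = ψ(n+1,m) + b(n,m-1)ψ(n,m)`. -/
def Dop (b : ℤ → ℤ → ℂ) (ψ : ℤ → ℤ → ℂ) : ℤ → ℤ → ℂ :=
  fun n m => ψ (n + 1) m + b n (m - 1) * ψ n m

/-- `L̂` (coefficients `a' b' c'`) is a Laplace transform of `L` (coefficients `a b c`). -/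
def IsLaplaceTransform (a' b' c' a b c : ℤ → ℤ → ℂ) : Prop :=
  ∃ q : ℤ → ℤ → ℂ, ∀ ψ : ℤ → ℤ → ℂ, ∀ n m : ℤ,
    Lop a' b' c' (Dop b ψ) n m = Lop a b c ψ (n + 1) m + q n m * Lop a b c ψ n m

private def colUp (b φ : ℤ → ℤ → ℂ) (g : ℤ → ℂ) : ℕ → ℤ → ℂ
  | 0 => g
  | k+1 => fun m => φ (k : ℤ) m - b (k : ℤ) (m-1) * colUp b φ g k m

private def colDown (b φ : ℤ → ℤ → ℂ) (g : ℤ → ℂ) : ℕ → ℤ → ℂ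
  | 0 => g
  | k+1 => fun m => (φ (-(k:ℤ)-1) m - colDown b φ g k m) / b (-(k:ℤ)-1) (m-1)

private def col (b φ : ℤ → ℤ → ℂ) (g : ℤ → ℂ) (n m : ℤ) : ℂ :=
  if 0 ≤ n then colUp b φ g n.toNat m else colDown b φ g (-n).toNat m

private lemma col_zero (b φ : ℤ → ℤ → ℂ) (g : ℤ → ℂ) (m : ℤ) : col b φ g 0 m = g m := by
  simp [col, colUp]

private lemma col_step (b φ : ℤ → ℤ → ℂ) (g : ℤ → ℂ) (hb : ∀ n m, b n m ≠ 0) (n m : ℤ) :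
    col b φ g (n+1) m = φ n m - b n (m-1) * col b φ g n m := by
  rcases le_or_gt 0 n with h | h
  · have h1 : (0:ℤ) ≤ n + 1 := by omega
    have h2 : (n+1).toNat = n.toNat + 1 := by omega
    have h3 : ((n.toNat : ℤ)) = n := Int.toNat_of_nonneg h
    simp only [col, if_pos h, if_pos h1, h2, colUp, h3]
  · have h1 : ¬ (0:ℤ) ≤ n := by omega
    have h2 : (-n).toNat = (-(n+1)).toNat + 1 := by omega
    have h3 : (((-(n+1)).toNat : ℤ)) = -(n+1) := Int.toNat_of_nonneg (by omega)
    have hC : colDown b φ g ((-(n+1)).toNat) m = col b φ g (n+1) m := by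
      by_cases h4 : 0 ≤ n + 1
      · have h5 : n + 1 = 0 := by omega
        rw [h5]
        simp [col, colUp, colDown]
      · simp only [col, if_neg h4]
    have hn : col b φ g n m = (φ n m - col b φ g (n+1) m) / b n (m-1) := by
      have : col b φ g n m = colDown b φ g ((-(n+1)).toNat + 1) m := by
        simp only [col, if_neg h1, h2]
      rw [this, colDown]
      simp only [h3]
      rw [show -(-(n+1)) - 1 = n by ring, hC]
    rw [hn]
    have hbne := hb n (m-1)
    field_simp
    ring

private lemma sum_delta (K : ℕ) (f : ℕ → ℂ) (d : ℤ) (hd : 0 ≤ d) (hdK : d < (K:ℤ)) :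
    ∑ j ∈ Finset.range K, f j * (if (j:ℤ) = d then 1 else 0) = f d.toNat := by
  rw [Finset.sum_eq_single d.toNat]
  · simp [Int.toNat_of_nonneg hd]
  · intro j hj hne
    have : (j:ℤ) ≠ d := by omega
    simp [this]
  · intro hmem
    exfalso
    apply hmem
    simp only [Finset.mem_range]
    omega

private lemma sum_delta' (K : ℕ) (f : ℕ → ℂ) (d : ℤ) (hd : ¬ (0 ≤ d ∧ d < (K:ℤ))) :
    ∑ j ∈ Finset.range K, f j * (if (j:ℤ) = d then 1 else 0) = 0 := by
  apply Finset.sum_eq_zero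
  intro j hj
  simp only [Finset.mem_range] at hj
  have : (j:ℤ) ≠ d := by omega
  simp [this]

private def Ahat (s : ℕ) (b : ℤ → ℤ → ℂ) (A : ℕ → ℤ → ℤ → ℂ) (i : ℕ) (n m : ℤ) : ℂ :=
  (if i ≤ s then b n (m-1) * A i n m else 0) + (if i = 0 then 0 else A (i-1) (n+1) m)

private def Bhat (b : ℤ → ℤ → ℂ) (B : ℕ → ℤ → ℤ → ℂ) (j : ℕ) (n m : ℤ) : ℂ :=
  B j (n+1) m + b n (m-1) * B j n m

private lemma Ahat_sum (s : ℕ) (b : ℤ → ℤ → ℂ) (A : ℕ → ℤ → ℤ → ℂ) (N : ℤ → ℂ) (n m : ℤ) :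
    ∑ i ∈ Finset.range (s+2), Ahat s b A i n m * N (n + (i:ℤ))
      = (∑ i ∈ Finset.range (s+1), A i (n+1) m * N ((n+1) + (i:ℤ)))
        + b n (m-1) * ∑ i ∈ Finset.range (s+1), A i n m * N (n + (i:ℤ)) := by
  have h1 : ∑ i ∈ Finset.range (s+2), (if i ≤ s then b n (m-1) * A i n m else 0) * N (n + (i:ℤ))
      = b n (m-1) * ∑ i ∈ Finset.range (s+1), A i n m * N (n + (i:ℤ)) := by
    rw [Finset.sum_range_succ, if_neg (by omega), zero_mul, add_zero, Finset.mul_sum]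
    refine Finset.sum_congr rfl (fun i hi => ?_)
    simp only [Finset.mem_range] at hi
    rw [if_pos (by omega), mul_assoc]
  have h2 : ∑ i ∈ Finset.range (s+2), (if i = 0 then 0 else A (i-1) (n+1) m) * N (n + (i:ℤ))
      = ∑ i ∈ Finset.range (s+1), A i (n+1) m * N ((n+1) + (i:ℤ)) := by
    rw [Finset.sum_range_succ' (fun i => (if i = 0 then (0:ℂ) else A (i-1) (n+1) m) * N (n + (i:ℤ))) (s+1)]
    simp only [Nat.succ_ne_zero, if_false, Nat.add_sub_cancel, eq_self_iff_true, if_true, zero_mul, add_zero]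
    refine Finset.sum_congr rfl (fun i hi => ?_)
    congr 1
    push_cast
    ring
  calc ∑ i ∈ Finset.range (s+2), Ahat s b A i n m * N (n + (i:ℤ))
      = (∑ i ∈ Finset.range (s+2), (if i ≤ s then b n (m-1) * A i n m else 0) * N (n + (i:ℤ)))
        + ∑ i ∈ Finset.range (s+2), (if i = 0 then 0 else A (i-1) (n+1) m) * N (n + (i:ℤ)) := by
        simp only [Ahat, add_mul]
        rw [Finset.sum_add_distrib]
    _ = _ := by rw [h1, h2]; ring

private lemma Bhat_sum (r : ℕ) (b : ℤ → ℤ → ℂ) (B : ℕ → ℤ → ℤ → ℂ)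
    (R1 : ∀ n m : ℤ, B r (n+1) m + b n (m-1) * B r n m = 0) (M : ℤ → ℂ) (n m : ℤ) :
    ∑ j ∈ Finset.range r, Bhat b B j n m * M (m + (j:ℤ))
      = (∑ j ∈ Finset.range (r+1), B j (n+1) m * M (m + (j:ℤ)))
        + b n (m-1) * ∑ j ∈ Finset.range (r+1), B j n m * M (m + (j:ℤ)) := by
  have h0 := R1 n m
  rw [Finset.sum_range_succ, Finset.sum_range_succ]
  have hL : ∑ j ∈ Finset.range r, Bhat b B j n m * M (m + (j:ℤ))
      = (∑ j ∈ Finset.range r, B j (n+1) m * M (m + (j:ℤ)))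
        + b n (m-1) * ∑ j ∈ Finset.range r, B j n m * M (m + (j:ℤ)) := by
    rw [Finset.mul_sum, ← Finset.sum_add_distrib]
    refine Finset.sum_congr rfl (fun j hj => ?_)
    simp only [Bhat]
    ring
  rw [hL]
  linear_combination (-(M (m + (r:ℤ)))) * h0


/-- Lemma 3: if the general solution of `L_0ψ = 0` has the stated finite
form with orders `s` and `r ≥ 1`, and `L_1` is a Laplace transform of `L_0` (whose
invariants are nowhere vanishing), then the general solution of `L_1ψ = 0` has the
analogous form with orders `s+1` and `r-1`, with nonvanishing extreme coefficients. -/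
theorem stmt7 (a b c a₁ b₁ c₁ : ℤ → ℤ → ℂ)
    (ha : ∀ n m, a n m ≠ 0) (hb : ∀ n m, b n m ≠ 0)
    (ha₁ : ∀ n m, a₁ n m ≠ 0) (hb₁ : ∀ n m, b₁ n m ≠ 0)
    (hh : ∀ n m, hInv a b c n m ≠ 0) (hk : ∀ n m, kInv a b c n m ≠ 0)
    (r s : ℕ) (hr : 1 ≤ r)
    (A B : ℕ → ℤ → ℤ → ℂ)
    (hA0 : ∀ n m, A 0 n m ≠ 0) (hAs : ∀ n m, A s n m ≠ 0)
    (hB0 : ∀ n m, B 0 n m ≠ 0) (hBr : ∀ n m, B r n m ≠ 0)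
    (hgen : ∀ ψ : ℤ → ℤ → ℂ,
      (∀ n m, Lop a b c ψ n m = 0) ↔
        ∃ N M : ℤ → ℂ, ∀ n m : ℤ,
          ψ n m = ∑ i ∈ Finset.range (s + 1), A i n m * N (n + (i : ℤ))
            + ∑ j ∈ Finset.range (r + 1), B j n m * M (m + (j : ℤ)))
    (hLT : IsLaplaceTransform a₁ b₁ c₁ a b c) :
    ∃ A' B' : ℕ → ℤ → ℤ → ℂ,
      (∀ n m, A' 0 n m ≠ 0) ∧ (∀ n m, A' (s + 1) n m ≠ 0) ∧
      (∀ n m, B' 0 n m ≠ 0) ∧ (∀ n m, B' (r - 1) n m ≠ 0) ∧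
      ∀ ψ : ℤ → ℤ → ℂ,
        (∀ n m, Lop a₁ b₁ c₁ ψ n m = 0) ↔
          ∃ N M : ℤ → ℂ, ∀ n m : ℤ,
            ψ n m = ∑ i ∈ Finset.range (s + 2), A' i n m * N (n + (i : ℤ))
              + ∑ j ∈ Finset.range r, B' j n m * M (m + (j : ℤ)) := by
    classical
  obtain ⟨q, hq⟩ := hLT
  -- the multiplier q equals b₁, hence is nowhere zero
  have hqb : ∀ n m, q n m = b₁ n m := by
    intro n m
    have h := hq (fun x y => (x - n - 1) * (x - n - 2) * (y - m)) n m
    simp only [Lop, Dop, add_sub_cancel_right] at h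
    push_cast at h
    have h2 : (b₁ n m - q n m) * (2 * b n m) = 0 := by linear_combination h
    rcases mul_eq_zero.mp h2 with h3 | h3
    · exact (sub_eq_zero.mp h3).symm
    · exact absurd h3 (mul_ne_zero two_ne_zero (hb n m))
  have hq0 : ∀ n m, q n m ≠ 0 := fun n m => (hqb n m) ▸ hb₁ n m
  -- nonvanishing denominator from the h-invariant
  have hden : ∀ n m, c n m - a n m * b n (m-1) ≠ 0 := by
    intro n m h0
    apply hh n m
    have habne : a n m * b n (m-1) ≠ 0 := mul_ne_zero (ha n m) (hb n (m-1))
    simp only [hInv, sub_eq_zero.mp h0, div_self habne, sub_self]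
  -- the family of delta-type kernel elements
  set Ψ : ℤ → ℤ → ℤ → ℂ :=
    fun m₀ n m => ∑ j ∈ Finset.range (r+1), B j n m * (if m + (j:ℤ) = m₀ then 1 else 0) with hΨ
  have hL : ∀ m₀ n m : ℤ, Lop a b c (Ψ m₀) n m = 0 := by
    intro m₀
    exact (hgen (Ψ m₀)).mpr
      ⟨fun _ => 0, fun t => if t = m₀ then 1 else 0, by intro n m; simp [hΨ]⟩
  have hval : ∀ m₀ n m : ℤ, Ψ m₀ n m
      = if 0 ≤ m₀ - m ∧ m₀ - m ≤ (r:ℤ) then B (m₀ - m).toNat n m else 0 := by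
    intro m₀ n m
    have hcond : ∀ j : ℕ, (m + (j:ℤ) = m₀) ↔ ((j:ℤ) = m₀ - m) := fun j => by omega
    have h1 : Ψ m₀ n m
        = ∑ j ∈ Finset.range (r+1), B j n m * (if (j:ℤ) = m₀ - m then 1 else 0) := by
      simp only [hΨ]
      exact Finset.sum_congr rfl (fun j _ => by rw [if_congr (hcond j) rfl rfl])
    rw [h1]
    by_cases hc : 0 ≤ m₀ - m ∧ m₀ - m ≤ (r:ℤ)
    · rw [if_pos hc, sum_delta (r+1) _ _ hc.1 (by push_cast; omega)]
    · rw [if_neg hc, sum_delta' (r+1) _ _ (by push_cast; omega)]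
  have R1 : ∀ n m : ℤ, B r (n+1) m + b n (m-1) * B r n m = 0 := by
    intro n m
    have h := hL (m + r) n (m - 1)
    simp only [Lop] at h
    rw [show m - 1 + 1 = m by ring] at h
    rw [hval (m+r) (n+1) m, hval (m+r) (n+1) (m-1), hval (m+r) n m, hval (m+r) n (m-1)] at h
    rw [if_pos ⟨by omega, by omega⟩, if_neg (by omega), if_pos ⟨by omega, by omega⟩,
      if_neg (by omega)] at h
    rw [show (m + (r:ℤ) - m).toNat = r by omega] at h
    linear_combination h
  have R2 : ∀ n m : ℤ, a n m * B 0 (n+1) m + c n m * B 0 n m = 0 := by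
    intro n m
    have h := hL m n m
    simp only [Lop] at h
    rw [hval m (n+1) (m+1), hval m (n+1) m, hval m n (m+1), hval m n m] at h
    rw [if_neg (by omega), if_pos ⟨by omega, by omega⟩, if_neg (by omega),
      if_pos ⟨by omega, by omega⟩] at h
    rw [show ((m:ℤ) - m).toNat = 0 by omega] at h
    linear_combination h
  have R3 : ∀ n m : ℤ, B (r-1) (n+1) (m+1) + a n m * B r (n+1) m
      + b n m * B (r-1) n (m+1) + c n m * B r n m = 0 := by
    intro n m
    have h := hL (m + r) n m
    simp only [Lop] at h
    rw [hval (m+r) (n+1) (m+1), hval (m+r) (n+1) m, hval (m+r) n (m+1), hval (m+r) n m] at h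
    rw [if_pos ⟨by omega, by omega⟩, if_pos ⟨by omega, by omega⟩,
      if_pos ⟨by omega, by omega⟩, if_pos ⟨by omega, by omega⟩] at h
    rw [show (m + (r:ℤ) - (m+1)).toNat = r - 1 by omega,
      show (m + (r:ℤ) - m).toNat = r by omega] at h
    linear_combination h
  refine ⟨Ahat s b A, Bhat b B, ?_, ?_, ?_, ?_, ?_⟩
  · intro n m
    simp only [Ahat, Nat.zero_le, if_pos, if_true, eq_self_iff_true, add_zero]
    simpa using mul_ne_zero (hb n (m-1)) (hA0 n m)
  · intro n m
    simp only [Ahat, if_neg (by omega : ¬ s + 1 ≤ s), if_neg (by omega : ¬ s + 1 = 0),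
      Nat.add_sub_cancel, zero_add]
    exact hAs (n+1) m
  · intro n m h0
    simp only [Bhat] at h0
    have h2 := R2 n m
    have h3 : (c n m - a n m * b n (m-1)) * B 0 n m = 0 := by
      linear_combination h2 - a n m * h0
    rcases mul_eq_zero.mp h3 with h4 | h4
    · exact hden n m h4
    · exact hB0 n m h4
  · intro n m h0
    simp only [Bhat] at h0
    have h3 := R3 n (m-1)
    rw [show m - 1 + 1 = m by ring] at h3
    have h1 := R1 n (m-1)
    have h5 : (c n (m-1) - a n (m-1) * b n (m-1-1)) * B r n (m-1) = 0 := by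
      linear_combination h3 - h0 - a n (m-1) * h1
    rcases mul_eq_zero.mp h5 with h4 | h4
    · exact hden n (m-1) h4
    · exact hBr n (m-1) h4
  · intro ψ
    constructor
    · -- forward: every solution of L₁ has the new form
      intro hLψ
      set g : ℤ → ℂ :=
        fun x => -(ψ 0 (x+1) + a 0 x * ψ 0 x) / (c 0 x - a 0 x * b 0 (x-1)) with hg
      set χ : ℤ → ℤ → ℂ := fun n m => col b ψ g n m with hχ
      have hD : ∀ n m : ℤ, χ (n+1) m = ψ n m - b n (m-1) * χ n m := by
        intro n m
        simp only [hχ]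
        exact col_step b ψ g hb n m
      have hχ0 : ∀ x : ℤ, χ 0 x = g x := by
        intro x
        simp only [hχ]
        exact col_zero b ψ g x
      have hDop : Dop b χ = ψ := by
        funext n m
        show χ (n+1) m + b n (m-1) * χ n m = ψ n m
        linear_combination hD n m
      have hu0 : ∀ m : ℤ, Lop a b c χ 0 m = 0 := by
        intro m
        simp only [Lop]
        have e1 := hD 0 (m+1)
        rw [show (m:ℤ) + 1 - 1 = m by ring] at e1
        have e2 := hD 0 m
        rw [e1, e2, hχ0 (m+1), hχ0 m, hg]
        have d1 := hden 0 m
        field_simp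
        ring
      have hrec : ∀ n m : ℤ, Lop a b c χ (n+1) m = - (q n m * Lop a b c χ n m) := by
        intro n m
        have h := hq χ n m
        rw [hDop] at h
        rw [hLψ n m] at h
        linear_combination -h
      have huz : ∀ n m : ℤ, Lop a b c χ n m = 0 := by
        intro n m
        induction n using Int.induction_on with
        | zero => exact hu0 m
        | succ k ih => rw [hrec, ih, mul_zero, neg_zero]
        | pred k ih =>
          have h := hrec (-(k:ℤ) - 1) m
          rw [show -(k:ℤ) - 1 + 1 = -(k:ℤ) by ring, ih] at h
          have := hq0 (-(k:ℤ) - 1) m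
          have h2 : q (-(k:ℤ) - 1) m * Lop a b c χ (-(k:ℤ) - 1) m = 0 := by
            linear_combination h
          rcases mul_eq_zero.mp h2 with h3 | h3
          · exact absurd h3 this
          · exact h3
      obtain ⟨N, M, hNM⟩ := (hgen χ).mp huz
      refine ⟨N, M, fun n m => ?_⟩
      rw [Ahat_sum, Bhat_sum r b B R1]
      have e1 := hNM (n+1) m
      have e2 := hNM n m
      have e3 := hD n m
      linear_combination e1 + b n (m-1) * e2 - e3
    · -- reverse: everything of the new form solves L₁
      rintro ⟨N, M, hNM⟩ n m
      set χ : ℤ → ℤ → ℂ := fun n m =>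
        (∑ i ∈ Finset.range (s+1), A i n m * N (n + (i:ℤ)))
          + ∑ j ∈ Finset.range (r+1), B j n m * M (m + (j:ℤ)) with hχ
      have hχ0 : ∀ n m : ℤ, Lop a b c χ n m = 0 :=
        (hgen χ).mpr ⟨N, M, fun _ _ => rfl⟩
      have hDχ : Dop b χ = ψ := by
        funext n' m'
        show χ (n'+1) m' + b n' (m'-1) * χ n' m' = ψ n' m'
        rw [hNM n' m', Ahat_sum s b A N n' m', Bhat_sum r b B R1 M n' m']
        simp only [hχ]
        ring
      have h := hq χ n m
      rw [hDχ, hχ0, hχ0] at h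
      simpa using h
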